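/- In the elephant random walk with m_2 < ∞, the second moments of the centered walk S̃_n = S_n − n·m_1 satisfy the recursion E(S̃_{n+1}^2) = (1 + 2α/n)·E(S̃_n^2) + M_2 with E(S̃_1^2) = M_2, where M_2 = m_2 − m_1^2. -/

import Mathlib

open MeasureTheory ProbabilityTheory Filter

/-- A realization of the randomness driving an elephant random walk with memory
parameter `α` on a probability space `(Ω, μ)`: an i.i.d. sequence `ξ` of step samples
and an independent i.i.d. sequence `U` of uniform random variables on `(0,1]`
(all jointly independent), used both for the `α`-coin and for the uniform choice of
a past step. -/
structure ERW {Ω : Type*} [MeasurableSpace Ω] (μ : Measure Ω) (α : ℝ) where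
  ξ : ℕ → Ω → ℝ
  U : ℕ → Ω → ℝ
  ξ_meas : ∀ n, Measurable (ξ n)
  U_meas : ∀ n, Measurable (U n)
  indep : iIndepFun (Sum.elim ξ U) μ
  ξ_ident : ∀ n, μ.map (ξ n) = μ.map (ξ 1)
  U_unif : ∀ n, μ.map (U n) = volume.restrict (Set.Ioc (0 : ℝ) 1)

namespace ERW

variable {Ω : Type*} [MeasurableSpace Ω] {μ : Measure Ω} {α : ℝ}

/-- The steps of the elephant random walk: `X 1 = ξ 1`, and `X (n+1)` repeats the
uniformly chosen past step `X ⌈n U/α⌉` when the uniform variable `U = U (n+1)`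
satisfies `U < α` (which happens with probability `α`, and conditionally on this
event `⌈n U/α⌉` is uniform on `{1,…,n}`), while `X (n+1)` is the fresh sample
`ξ (n+1)` when `U ≥ α` (probability `1-α`). -/
noncomputable def X (E : ERW μ α) : ℕ → Ω → ℝ
  | 0 => E.ξ 0
  | 1 => E.ξ 1
  | (n + 2) => fun ω =>
      if E.U (n + 2) ω < α then
        E.X (min (n + 1) (max 1 ⌈(n + 1 : ℝ) * E.U (n + 2) ω / α⌉₊)) ω
      else E.ξ (n + 2) ω
  decreasing_by exact Nat.lt_succ_of_le (min_le_left _ _)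

/-- The position of the elephant random walk after `n` steps. -/
noncomputable def S (E : ERW μ α) (n : ℕ) (ω : Ω) : ℝ :=
  ∑ k ∈ Finset.Icc 1 n, E.X k ω

/-- The natural filtration `F n = σ(X 1, …, X n)` of the elephant random walk. -/
noncomputable def F (E : ERW μ α) (n : ℕ) : MeasurableSpace Ω :=
  ⨆ k ∈ Set.Icc 1 n, MeasurableSpace.comap (E.X k) inferInstance

/-- The mean `m₁ = E ξ₁` of the step distribution. -/
noncomputable def m1 (E : ERW μ α) : ℝ := ∫ ω, E.ξ 1 ω ∂μ

end ERW

namespace ERWAux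
open ERW MeasurableSpace
variable {Ω : Type*} [MeasurableSpace Ω] {μ : Measure Ω} {α : ℝ}

/-- The index of the past step repeated, as a function of the uniform sample. -/
noncomputable def idxf (α : ℝ) (n : ℕ) (u : ℝ) : ℕ := min n (max 1 ⌈(n : ℝ) * u / α⌉₊)

noncomputable def gind (α : ℝ) (n k : ℕ) (u : ℝ) : ℝ :=
  if u < α ∧ idxf α n u = k then 1 else 0

noncomputable def gge (α : ℝ) (u : ℝ) : ℝ := if u < α then 0 else 1

lemma measurable_idxf {n : ℕ} : Measurable (idxf α n) := by
  unfold idxf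
  exact measurable_const.min
    (measurable_const.max ((measurable_id.const_mul _).div_const _).nat_ceil)

lemma measurable_gind {n k : ℕ} : Measurable (gind α n k) := by
  unfold gind
  refine Measurable.ite ?_ measurable_const measurable_const
  exact (measurableSet_Iio).inter (measurable_idxf (measurableSet_singleton k))

lemma measurable_gge : Measurable (gge α) := by
  unfold gge
  exact Measurable.ite measurableSet_Iio measurable_const measurable_const

lemma abs_gind_le {n k : ℕ} (u : ℝ) : |gind α n k u| ≤ 1 := by
  unfold gind; split <;> norm_num

lemma abs_gge_le (u : ℝ) : |gge α u| ≤ 1 := by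
  unfold gge; split <;> norm_num

lemma idxf_mem {n : ℕ} (hn : 1 ≤ n) (u : ℝ) : idxf α n u ∈ Finset.Icc 1 n := by
  simp only [Finset.mem_Icc, idxf]
  exact ⟨le_min hn (le_max_left _ _), min_le_left _ _⟩

/-- The block of indices up to `n`. -/
def blk (n : ℕ) : Set (ℕ ⊕ ℕ) := Sum.inl '' Set.Iic n ∪ Sum.inr '' Set.Iic n

lemma measurable_elim (E : ERW μ α) (i : ℕ ⊕ ℕ) : Measurable (Sum.elim E.ξ E.U i) := by
  cases i with
  | inl j => exact E.ξ_meas j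
  | inr j => exact E.U_meas j

/-- The σ-algebra generated by `ξ i, U i` for `i ≤ n`. -/
noncomputable def Gm (E : ERW μ α) (n : ℕ) : MeasurableSpace Ω :=
  ⨆ i ∈ blk n, MeasurableSpace.comap (Sum.elim E.ξ E.U i) inferInstance

/-- The σ-algebra generated by `ξ i, U i` for `i > n`. -/
noncomputable def Gm' (E : ERW μ α) (n : ℕ) : MeasurableSpace Ω :=
  ⨆ i ∈ (blk n)ᶜ, MeasurableSpace.comap (Sum.elim E.ξ E.U i) inferInstance

lemma Gm_le (E : ERW μ α) (n : ℕ) : Gm E n ≤ ‹MeasurableSpace Ω› :=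
  iSup₂_le fun i _ => (measurable_elim E i).comap_le

lemma measGm_ξ (E : ERW μ α) {i n : ℕ} (h : i ≤ n) : Measurable[Gm E n] (E.ξ i) := by
  have h1 : MeasurableSpace.comap (Sum.elim E.ξ E.U (Sum.inl i)) inferInstance ≤ Gm E n :=
    le_biSup (fun j => MeasurableSpace.comap (Sum.elim E.ξ E.U j) inferInstance)
      (show Sum.inl i ∈ blk n from Or.inl ⟨i, h, rfl⟩)
  exact Measurable.of_comap_le h1

lemma measGm_U (E : ERW μ α) {i n : ℕ} (h : i ≤ n) : Measurable[Gm E n] (E.U i) := by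
  have h1 : MeasurableSpace.comap (Sum.elim E.ξ E.U (Sum.inr i)) inferInstance ≤ Gm E n :=
    le_biSup (fun j => MeasurableSpace.comap (Sum.elim E.ξ E.U j) inferInstance)
      (show Sum.inr i ∈ blk n from Or.inr ⟨i, h, rfl⟩)
  exact Measurable.of_comap_le h1

lemma inl_mem_compl_blk {i n : ℕ} (h : n < i) : Sum.inl i ∈ (blk n)ᶜ := by
  simp only [blk, Set.mem_compl_iff, Set.mem_union, Set.mem_image, Set.mem_Iic]
  rintro (⟨x, hx, hxe⟩ | ⟨x, hx, hxe⟩) <;> simp_all <;> omega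

lemma inr_mem_compl_blk {i n : ℕ} (h : n < i) : Sum.inr i ∈ (blk n)ᶜ := by
  simp only [blk, Set.mem_compl_iff, Set.mem_union, Set.mem_image, Set.mem_Iic]
  rintro (⟨x, hx, hxe⟩ | ⟨x, hx, hxe⟩) <;> simp_all <;> omega

lemma measGm'_ξ (E : ERW μ α) {i n : ℕ} (h : n < i) : Measurable[Gm' E n] (E.ξ i) := by
  have h1 : MeasurableSpace.comap (Sum.elim E.ξ E.U (Sum.inl i)) inferInstance ≤ Gm' E n :=
    le_biSup (fun j => MeasurableSpace.comap (Sum.elim E.ξ E.U j) inferInstance)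
      (inl_mem_compl_blk h)
  exact Measurable.of_comap_le h1

lemma measGm'_U (E : ERW μ α) {i n : ℕ} (h : n < i) : Measurable[Gm' E n] (E.U i) := by
  have h1 : MeasurableSpace.comap (Sum.elim E.ξ E.U (Sum.inr i)) inferInstance ≤ Gm' E n :=
    le_biSup (fun j => MeasurableSpace.comap (Sum.elim E.ξ E.U j) inferInstance)
      (inr_mem_compl_blk h)
  exact Measurable.of_comap_le h1

lemma measurable_comp_idx {Ω' : Type*} [MeasurableSpace Ω'] {g : ℕ → Ω' → ℝ}
    (hg : ∀ k, Measurable (g k)) {idx : Ω' → ℕ} (hidx : Measurable idx) :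
    Measurable fun ω => g (idx ω) ω := by
  have h1 : Measurable fun p : Ω' × ℕ => g p.2 p.1 :=
    measurable_from_prod_countable_left fun k => hg k
  exact h1.comp (measurable_id.prodMk hidx)

lemma X_succ_eq (E : ERW μ α) {n : ℕ} (hn : 1 ≤ n) : E.X (n+1) = fun ω =>
    if E.U (n+1) ω < α then E.X (idxf α n (E.U (n+1) ω)) ω else E.ξ (n+1) ω := by
  obtain ⟨m, rfl⟩ : ∃ m, n = m + 1 := ⟨n-1, by omega⟩
  rw [ERW.X]
  funext ω
  simp only [idxf]
  norm_num

lemma measGm_X (E : ERW μ α) (n : ℕ) : ∀ k, 1 ≤ k → k ≤ n → Measurable[Gm E n] (E.X k) := by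
  intro k
  induction k using Nat.strong_induction_on with
  | _ k ih =>
    match k with
    | 0 => intro h; omega
    | 1 =>
      intro _ h
      have : E.X 1 = E.ξ 1 := by rw [ERW.X]
      rw [this]; exact measGm_ξ E h
    | (m+2) =>
      intro _ h
      rw [X_succ_eq E (show 1 ≤ m+1 by omega)]
      set g : ℕ → Ω → ℝ := fun k => if 1 ≤ k ∧ k ≤ m + 1 then E.X k else fun _ => 0 with hg
      have hgm : ∀ k, Measurable[Gm E n] (g k) := by
        intro k
        rw [hg]
        beta_reduce
        split
        · next hk => exact ih k (by omega) hk.1 (by omega)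
        · exact measurable_const
      have hU : Measurable[Gm E n] (E.U (m+2)) := measGm_U E (by omega)
      have hidx : Measurable[Gm E n] fun ω => idxf α (m+1) (E.U (m+2) ω) :=
        measurable_idxf.comp hU
      have key : Measurable[Gm E n] fun ω => g (idxf α (m+1) (E.U (m+2) ω)) ω :=
        @measurable_comp_idx Ω (Gm E n) g hgm _ hidx
      have heq : (fun ω => g (idxf α (m+1) (E.U (m+2) ω)) ω)
          = fun ω => E.X (idxf α (m+1) (E.U (m+2) ω)) ω := by
        funext ω
        have := idxf_mem (α := α) (show 1 ≤ m+1 by omega) (E.U (m+2) ω)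
        rw [Finset.mem_Icc] at this
        rw [hg]; simp only [this, and_self, if_pos]
      rw [heq] at key
      exact Measurable.ite (hU measurableSet_Iio) key (measGm_ξ E h)

lemma meas_X (E : ERW μ α) (k : ℕ) : Measurable (E.X k) := by
  match k with
  | 0 => have : E.X 0 = E.ξ 0 := by rw [ERW.X]
         rw [this]; exact E.ξ_meas 0
  | (m+1) => exact (measGm_X E (m+1) (m+1) (by omega) le_rfl).mono (Gm_le E (m+1)) le_rfl


section Indep
variable [IsProbabilityMeasure μ]

lemma indep_Gm (E : ERW μ α) (n : ℕ) : Indep (Gm E n) (Gm' E n) μ :=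
  indep_biSup_compl (fun i => (measurable_elim E i).comap_le) E.indep (blk n)

lemma indepFun_key (E : ERW μ α) (n : ℕ) {f φ : Ω → ℝ} (hf : Measurable[Gm E n] f)
    (hφ : Measurable[Gm' E n] φ) : IndepFun f φ μ :=
  indep_of_indep_of_le_right (indep_of_indep_of_le_left (indep_Gm E n) hf.comap_le)
    hφ.comap_le

/-- The key independence computation: the integral of a product of a function of the
past, a function of `U (n+1)` and a function of `ξ (n+1)` factorizes. -/
lemma key (E : ERW μ α) {n : ℕ} {f : Ω → ℝ} (hfm : Measurable[Gm E n] f)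
    (hfi : Integrable f μ) {g h : ℝ → ℝ} (hg : Measurable g) (hgb : ∀ u, |g u| ≤ 1)
    (hh : Measurable h) (hhi : Integrable (fun ω => h (E.ξ 1 ω)) μ) :
    Integrable (fun ω => f ω * (g (E.U (n+1) ω) * h (E.ξ (n+1) ω))) μ ∧
    ∫ ω, f ω * (g (E.U (n+1) ω) * h (E.ξ (n+1) ω)) ∂μ
      = (∫ ω, f ω ∂μ) * ((∫ u in Set.Ioc (0:ℝ) 1, g u) * (∫ ω, h (E.ξ 1 ω) ∂μ)) := by
  have hU : Measurable[Gm' E n] (E.U (n+1)) := measGm'_U E (by omega)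
  have hξ : Measurable[Gm' E n] (E.ξ (n+1)) := measGm'_ξ E (by omega)
  have hφm : Measurable[Gm' E n] (fun ω => g (E.U (n+1) ω) * h (E.ξ (n+1) ω)) :=
    (hg.comp hU).mul (hh.comp hξ)
  have hIF : IndepFun f (fun ω => g (E.U (n+1) ω) * h (E.ξ (n+1) ω)) μ :=
    indepFun_key E n hfm hφm
  -- integrability of h ∘ ξ (n+1)
  have h1 : Integrable h (μ.map (E.ξ 1)) :=
    (integrable_map_measure hh.aestronglyMeasurable (E.ξ_meas 1).aemeasurable).mpr hhi
  have hξint : Integrable (fun ω => h (E.ξ (n+1) ω)) μ := by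
    have := (integrable_map_measure hh.aestronglyMeasurable
        (E.ξ_meas (n+1)).aemeasurable).mp (by rw [E.ξ_ident]; exact h1)
    exact this
  -- integrability of the product of the last two factors
  have hφint : Integrable (fun ω => g (E.U (n+1) ω) * h (E.ξ (n+1) ω)) μ :=
    hξint.bdd_mul ((hg.comp (E.U_meas (n+1))).aestronglyMeasurable)
      (ae_of_all _ fun ω => (by simpa using hgb (E.U (n+1) ω) : ‖g (E.U (n+1) ω)‖ ≤ 1))
  constructor
  · exact hIF.integrable_mul hfi hφint
  · have heq1 : ∫ ω, f ω * (g (E.U (n+1) ω) * h (E.ξ (n+1) ω)) ∂μ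
        = (∫ ω, f ω ∂μ) * ∫ ω, g (E.U (n+1) ω) * h (E.ξ (n+1) ω) ∂μ :=
      hIF.integral_fun_mul_eq_mul_integral hfi.aestronglyMeasurable hφint.aestronglyMeasurable
    have hIF2 : IndepFun (fun ω => g (E.U (n+1) ω)) (fun ω => h (E.ξ (n+1) ω)) μ := by
      have hbase : IndepFun (E.U (n+1)) (E.ξ (n+1)) μ :=
        E.indep.indepFun (show (Sum.inr (n+1) : ℕ ⊕ ℕ) ≠ Sum.inl (n+1) by simp)
      exact hbase.comp hg hh
    have heq2 : ∫ ω, g (E.U (n+1) ω) * h (E.ξ (n+1) ω) ∂μ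
        = (∫ ω, g (E.U (n+1) ω) ∂μ) * ∫ ω, h (E.ξ (n+1) ω) ∂μ := by
      have hgint : Integrable (fun ω => g (E.U (n+1) ω)) μ :=
        (integrable_const (1:ℝ)).mono'
          ((hg.comp (E.U_meas (n+1))).aestronglyMeasurable)
          (ae_of_all _ fun ω => by simpa using hgb (E.U (n+1) ω))
      exact hIF2.integral_fun_mul_eq_mul_integral hgint.aestronglyMeasurable hξint.aestronglyMeasurable
    have heq3 : ∫ ω, g (E.U (n+1) ω) ∂μ = ∫ u in Set.Ioc (0:ℝ) 1, g u := by
      rw [← E.U_unif (n+1)]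
      exact (integral_map (E.U_meas (n+1)).aemeasurable hg.aestronglyMeasurable).symm
    have heq4 : ∫ ω, h (E.ξ (n+1) ω) ∂μ = ∫ ω, h (E.ξ 1 ω) ∂μ := by
      rw [← integral_map (E.ξ_meas (n+1)).aemeasurable hh.aestronglyMeasurable,
        E.ξ_ident (n+1),
        integral_map (E.ξ_meas 1).aemeasurable hh.aestronglyMeasurable]
    rw [heq1, heq2, heq3, heq4]

end Indep

/-- Pointwise decomposition of `φ (X (n+1))` along the value of `U (n+1)`. -/
lemma decomp (E : ERW μ α) {n : ℕ} (hn : 1 ≤ n) (φ : ℝ → ℝ) (ω : Ω) :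
    φ (E.X (n+1) ω) = (∑ k ∈ Finset.Icc 1 n, gind α n k (E.U (n+1) ω) * φ (E.X k ω))
      + gge α (E.U (n+1) ω) * φ (E.ξ (n+1) ω) := by
  rw [X_succ_eq E hn]
  beta_reduce
  by_cases h : E.U (n+1) ω < α
  · rw [if_pos h]
    have hterm : ∀ k ∈ Finset.Icc 1 n, gind α n k (E.U (n+1) ω) * φ (E.X k ω)
        = if idxf α n (E.U (n+1) ω) = k then φ (E.X k ω) else 0 := by
      intro k _
      simp only [gind, h, true_and]
      split <;> simp
    rw [Finset.sum_congr rfl hterm, Finset.sum_ite_eq,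
      if_pos (idxf_mem hn (E.U (n+1) ω))]
    simp [gge, h]
  · rw [if_neg h]
    have hterm : ∀ k ∈ Finset.Icc 1 n, gind α n k (E.U (n+1) ω) * φ (E.X k ω) = 0 := by
      intro k _
      simp [gind, h]
    rw [Finset.sum_congr rfl hterm]
    simp [gge, h]

/-- The measure under the uniform distribution of the event selecting past step `k`. -/
lemma integral_gind (hα : α ∈ Set.Icc (0:ℝ) 1) {n k : ℕ} (hn : 1 ≤ n)
    (hk : k ∈ Finset.Icc 1 n) : ∫ u in Set.Ioc (0:ℝ) 1, gind α n k u = α / n := by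
  obtain ⟨hk1, hkn⟩ := Finset.mem_Icc.mp hk
  have hn' : (0:ℝ) < n := by exact_mod_cast hn
  have hJ : MeasurableSet {u : ℝ | u < α ∧ idxf α n u = k} :=
    measurableSet_Iio.inter (measurable_idxf (measurableSet_singleton k))
  have hind : gind α n k = Set.indicator {u : ℝ | u < α ∧ idxf α n u = k}
      (fun _ => (1:ℝ)) := by
    funext u
    simp only [gind, Set.indicator, Set.mem_setOf_eq]
  rw [hind, integral_indicator_const _ hJ, Measure.real, Measure.restrict_apply hJ]
  have hvol : volume ({u : ℝ | u < α ∧ idxf α n u = k} ∩ Set.Ioc 0 1)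
      = ENNReal.ofReal (α / n) := by
    rcases eq_or_lt_of_le hα.1 with hα0 | hα0
    · have : {u : ℝ | u < α ∧ idxf α n u = k} ∩ Set.Ioc 0 1 = ∅ := by
        ext u
        simp only [Set.mem_inter_iff, Set.mem_setOf_eq, Set.mem_Ioc, Set.mem_empty_iff_false,
          iff_false]
        rintro ⟨⟨h1, _⟩, h2, _⟩
        rw [← hα0] at h1; linarith
      rw [this, ← hα0]
      simp
    · set a := α * (k - 1 : ℝ) / n with ha
      set b := α * k / n with hb
      have hk1' : (1:ℝ) ≤ k := by exact_mod_cast hk1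
      have hkn' : (k:ℝ) ≤ n := by exact_mod_cast hkn
      have hab : b - a = α / n := by rw [ha, hb]; ring
      have ha0 : 0 ≤ a := div_nonneg (mul_nonneg (le_of_lt hα0) (by linarith)) (le_of_lt hn')
      have hbα : b ≤ α := by
        rw [hb, div_le_iff₀ hn']
        nlinarith
      have hiff : ∀ u : ℝ, 0 < u → u < α → (idxf α n u = k ↔ a < u ∧ u ≤ b) := by
        intro u hu huα
        have hx0 : 0 < (n:ℝ) * u / α := by positivity
        have hxn : (n:ℝ) * u / α ≤ n := by
          rw [div_le_iff₀ hα0]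
          nlinarith
        have hceil1 : 1 ≤ ⌈(n:ℝ) * u / α⌉₊ := Nat.one_le_ceil_iff.mpr hx0
        have hceiln : ⌈(n:ℝ) * u / α⌉₊ ≤ n := Nat.ceil_le.mpr hxn
        have hidx : idxf α n u = ⌈(n:ℝ) * u / α⌉₊ := by
          rw [idxf, max_eq_right hceil1, min_eq_right hceiln]
        rw [hidx, Nat.ceil_eq_iff (by omega)]
        have hcast : ((k - 1 : ℕ) : ℝ) = (k:ℝ) - 1 := by
          push_cast [hk1]; ring
        rw [hcast]
        constructor
        · rintro ⟨h1, h2⟩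
          constructor
          · rw [ha, div_lt_iff₀ hn']
            rw [lt_div_iff₀ hα0] at h1
            nlinarith
          · rw [hb, le_div_iff₀ hn']
            rw [div_le_iff₀ hα0] at h2
            nlinarith
        · rintro ⟨h1, h2⟩
          constructor
          · rw [lt_div_iff₀ hα0]
            rw [ha, div_lt_iff₀ hn'] at h1
            nlinarith
          · rw [div_le_iff₀ hα0]
            rw [hb, le_div_iff₀ hn'] at h2
            nlinarith
      have hsub1 : {u : ℝ | u < α ∧ idxf α n u = k} ∩ Set.Ioc 0 1 ⊆ Set.Ioc a b := by
        rintro u ⟨⟨h1, h2⟩, h3, _⟩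
        exact (hiff u h3 h1).mp h2
      have hsub2 : Set.Ioo a b ⊆ {u : ℝ | u < α ∧ idxf α n u = k} ∩ Set.Ioc 0 1 := by
        rintro u ⟨h1, h2⟩
        have hu0 : 0 < u := lt_of_le_of_lt ha0 h1
        have huα : u < α := lt_of_lt_of_le h2 hbα
        refine ⟨⟨huα, (hiff u hu0 huα).mpr ⟨h1, le_of_lt h2⟩⟩, hu0, le_trans (le_of_lt h2) (le_trans hbα hα.2)⟩
      refine le_antisymm ?_ ?_
      · calc volume ({u : ℝ | u < α ∧ idxf α n u = k} ∩ Set.Ioc 0 1)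
            ≤ volume (Set.Ioc a b) := measure_mono hsub1
          _ = ENNReal.ofReal (α / n) := by rw [Real.volume_Ioc, hab]
      · calc ENNReal.ofReal (α / n) = volume (Set.Ioo a b) := by rw [Real.volume_Ioo, hab]
          _ ≤ volume ({u : ℝ | u < α ∧ idxf α n u = k} ∩ Set.Ioc 0 1) := measure_mono hsub2
  rw [hvol, ENNReal.toReal_ofReal (div_nonneg hα.1 (le_of_lt hn'))]
  simp

lemma integral_gge (hα : α ∈ Set.Icc (0:ℝ) 1) :
    ∫ u in Set.Ioc (0:ℝ) 1, gge α u = 1 - α := by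
  have hJ : MeasurableSet {u : ℝ | ¬ u < α} := (measurableSet_Iio (a := α)).compl
  have hind : gge α = Set.indicator {u : ℝ | ¬ u < α} (fun _ => (1:ℝ)) := by
    funext u
    simp only [gge, Set.indicator, Set.mem_setOf_eq]
    split <;> simp_all
  rw [hind, integral_indicator_const _ hJ, Measure.real, Measure.restrict_apply hJ]
  have hvol : volume ({u : ℝ | ¬ u < α} ∩ Set.Ioc 0 1) = ENNReal.ofReal (1 - α) := by
    rcases eq_or_lt_of_le hα.1 with hα0 | hα0
    · have : {u : ℝ | ¬ u < α} ∩ Set.Ioc 0 1 = Set.Ioc 0 1 := by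
        ext u
        simp only [Set.mem_inter_iff, Set.mem_setOf_eq, Set.mem_Ioc, not_lt]
        constructor
        · rintro ⟨_, h⟩; exact h
        · rintro ⟨h1, h2⟩; exact ⟨by rw [← hα0]; linarith, h1, h2⟩
      rw [this, Real.volume_Ioc, ← hα0]
    · have : {u : ℝ | ¬ u < α} ∩ Set.Ioc 0 1 = Set.Icc α 1 := by
        ext u
        simp only [Set.mem_inter_iff, Set.mem_setOf_eq, Set.mem_Ioc, Set.mem_Icc, not_lt]
        constructor
        · rintro ⟨h1, _, h2⟩; exact ⟨h1, h2⟩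
        · rintro ⟨h1, h2⟩; exact ⟨h1, lt_of_lt_of_le hα0 h1, h2⟩
      rw [this, Real.volume_Icc]
  rw [hvol, ENNReal.toReal_ofReal (by linarith [hα.2])]
  simp

lemma integrable_mul_of_memLp_two {f g : Ω → ℝ} (hf : MemLp f 2 μ) (hg : MemLp g 2 μ) :
    Integrable (fun ω => f ω * g ω) μ := by
  refine Integrable.mono' ((hf.integrable_sq.add hg.integrable_sq).const_mul (1/2))
    (hf.aestronglyMeasurable.mul hg.aestronglyMeasurable) (ae_of_all _ fun ω => ?_)
  rw [Real.norm_eq_abs, abs_mul]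
  simp only [Pi.add_apply]
  nlinarith [sq_nonneg (|f ω| - |g ω|), sq_abs (f ω), sq_abs (g ω), abs_nonneg (f ω),
    abs_nonneg (g ω)]

section Decomp
variable [IsProbabilityMeasure μ]

/-- Integral of `f · φ(X (n+1))` for `f` a function of the past. -/
lemma integral_decomp (E : ERW μ α) (hα : α ∈ Set.Icc (0:ℝ) 1) {n : ℕ} (hn : 1 ≤ n)
    (φ : ℝ → ℝ) (hφ : Measurable φ) (hφint : Integrable (fun ω => φ (E.ξ 1 ω)) μ)
    (f : Ω → ℝ) (hfm : Measurable[Gm E n] f) (hfi : Integrable f μ)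
    (hfXint : ∀ k ∈ Finset.Icc 1 n, Integrable (fun ω => f ω * φ (E.X k ω)) μ) :
    Integrable (fun ω => f ω * φ (E.X (n+1) ω)) μ ∧
    ∫ ω, f ω * φ (E.X (n+1) ω) ∂μ
      = (α / n) * (∑ k ∈ Finset.Icc 1 n, ∫ ω, f ω * φ (E.X k ω) ∂μ)
        + (1 - α) * (∫ ω, f ω ∂μ) * (∫ ω, φ (E.ξ 1 ω) ∂μ) := by
  have hpt : (fun ω => f ω * φ (E.X (n+1) ω)) = fun ω =>
      (∑ k ∈ Finset.Icc 1 n,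
        (f ω * φ (E.X k ω)) * (gind α n k (E.U (n+1) ω) * (1:ℝ)))
      + f ω * (gge α (E.U (n+1) ω) * φ (E.ξ (n+1) ω)) := by
    funext ω
    rw [decomp E hn φ ω, mul_add, Finset.mul_sum]
    congr 1
    exact Finset.sum_congr rfl fun k _ => by ring
  -- each summand via `key`
  have hkey : ∀ k ∈ Finset.Icc 1 n,
      Integrable (fun ω => (f ω * φ (E.X k ω)) * (gind α n k (E.U (n+1) ω)
        * (fun _ : ℝ => (1:ℝ)) (E.ξ (n+1) ω))) μ ∧
      ∫ ω, (f ω * φ (E.X k ω)) * (gind α n k (E.U (n+1) ω)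
          * (fun _ : ℝ => (1:ℝ)) (E.ξ (n+1) ω)) ∂μ
        = (∫ ω, f ω * φ (E.X k ω) ∂μ) * ((∫ u in Set.Ioc (0:ℝ) 1, gind α n k u)
            * (∫ ω, (fun _ : ℝ => (1:ℝ)) (E.ξ 1 ω) ∂μ)) := by
    intro k hk
    obtain ⟨hk1, hkn⟩ := Finset.mem_Icc.mp hk
    exact key E (hfm.mul ((hφ.comp (measGm_X E n k hk1 hkn))))
      (hfXint k hk) measurable_gind (fun u => abs_gind_le u) measurable_const
      (integrable_const 1)
  have hkey2 := key E (n := n) (g := gge α) (h := φ) hfm hfi measurable_gge (fun u => abs_gge_le u) hφ hφint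
  constructor
  · rw [hpt]
    exact Integrable.add
      (integrable_finset_sum _ fun k hk => by simpa using (hkey k hk).1)
      (by simpa using hkey2.1)
  · rw [hpt]
    rw [integral_add (integrable_finset_sum _ fun k hk => by simpa using (hkey k hk).1)
      (by simpa using hkey2.1),
      integral_finset_sum _ fun k hk => by simpa using (hkey k hk).1]
    have hs : ∀ k ∈ Finset.Icc 1 n,
        ∫ ω, (f ω * φ (E.X k ω)) * (gind α n k (E.U (n+1) ω) * (1:ℝ)) ∂μ
          = (α / n) * ∫ ω, f ω * φ (E.X k ω) ∂μ := by
      intro k hk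
      have := (hkey k hk).2
      simp only [integral_const, measure_univ, probReal_univ, smul_eq_mul,
        one_mul, mul_one] at this ⊢
      rw [this, integral_gind hα hn hk]
      ring
    rw [Finset.sum_congr rfl hs, hkey2.2, integral_gge hα, ← Finset.mul_sum]
    ring

end Decomp

section Moments
variable [IsProbabilityMeasure μ]

lemma moments (E : ERW μ α) (hα : α ∈ Set.Icc (0:ℝ) 1)
    (hint : Integrable (fun ω => (E.ξ 1 ω) ^ 2) μ) :
    ∀ n, 1 ≤ n → MemLp (E.X n) 2 μ ∧ (∫ ω, E.X n ω ∂μ) = E.m1 ∧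
      (∫ ω, (E.X n ω) ^ 2 ∂μ) = ∫ ω, (E.ξ 1 ω) ^ 2 ∂μ := by
  have hξ2 : MemLp (E.ξ 1) 2 μ :=
    (memLp_two_iff_integrable_sq (E.ξ_meas 1).aestronglyMeasurable).mpr hint
  have hξ1int : Integrable (E.ξ 1) μ := hξ2.integrable one_le_two
  intro n
  induction n using Nat.strong_induction_on with
  | _ n ih =>
    intro hn
    match n, hn with
    | 1, _ =>
      have hX1 : E.X 1 = E.ξ 1 := by rw [ERW.X]
      rw [hX1]
      exact ⟨hξ2, rfl, rfl⟩
    | (m+2), _ =>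
      have hm1 : 1 ≤ m + 1 := by omega
      have hIH : ∀ k ∈ Finset.Icc 1 (m+1), MemLp (E.X k) 2 μ ∧ (∫ ω, E.X k ω ∂μ) = E.m1 ∧
          (∫ ω, (E.X k ω) ^ 2 ∂μ) = ∫ ω, (E.ξ 1 ω) ^ 2 ∂μ := fun k hk => by
        obtain ⟨h1, h2⟩ := Finset.mem_Icc.mp hk
        exact ih k (by omega) h1
      have hd1 := integral_decomp E hα hm1 (fun x => x) measurable_id hξ1int
        (fun _ => (1:ℝ)) measurable_const (integrable_const 1)
        (fun k hk => by simpa using ((hIH k hk).1.integrable one_le_two))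
      have hd2 := integral_decomp E hα hm1 (fun x => x ^ 2)
        (measurable_id.pow_const 2) hint
        (fun _ => (1:ℝ)) measurable_const (integrable_const 1)
        (fun k hk => by simpa using (hIH k hk).1.integrable_sq)
      have hcard : (Finset.Icc 1 (m+1)).card = m + 1 := by rw [Nat.card_Icc]; omega
      have hne : ((m:ℝ) + 1) ≠ 0 := by positivity
      have hmean : ∫ ω, E.X (m+2) ω ∂μ = E.m1 := by
        have h2 := hd1.2
        simp only [one_mul, integral_const, measure_univ, probReal_univ, smul_eq_mul,
          mul_one] at h2
        rw [Finset.sum_congr rfl (fun k hk => by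
            simpa using (hIH k hk).2.1),
          Finset.sum_const, nsmul_eq_mul, hcard] at h2
        have h3 : ∫ ω, E.X (m+2) ω ∂μ
            = α / (↑(m+1)) * (↑(m+1) * E.m1) + (1 - α) * E.m1 := h2
        rw [h3]
        push_cast
        field_simp
        ring
      have hsq : ∫ ω, (E.X (m+2) ω) ^ 2 ∂μ = ∫ ω, (E.ξ 1 ω) ^ 2 ∂μ := by
        have h2 := hd2.2
        simp only [one_mul, integral_const, measure_univ, probReal_univ, smul_eq_mul,
          mul_one] at h2
        rw [Finset.sum_congr rfl (fun k hk => by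
            simpa using (hIH k hk).2.2),
          Finset.sum_const, nsmul_eq_mul, hcard] at h2
        have h3 : ∫ ω, (E.X (m+2) ω) ^ 2 ∂μ
            = α / (↑(m+1)) * (↑(m+1) * ∫ ω, (E.ξ 1 ω) ^ 2 ∂μ)
              + (1 - α) * ∫ ω, (E.ξ 1 ω) ^ 2 ∂μ := h2
        rw [h3]
        push_cast
        field_simp
        ring
      have hsqint : Integrable (fun ω => (E.X (m+2) ω) ^ 2) μ := by
        have := hd2.1
        simpa using this
      exact ⟨(memLp_two_iff_integrable_sq
        (meas_X E (m+2)).aestronglyMeasurable).mpr hsqint, hmean, hsq⟩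

end Moments

lemma X_one (E : ERW μ α) : E.X 1 = E.ξ 1 := by rw [ERW.X]

lemma S_def (E : ERW μ α) (n : ℕ) : E.S n = fun ω => ∑ k ∈ Finset.Icc 1 n, E.X k ω := rfl

end ERWAux

open ERW in
/-- Recursion for the second moment of the centered elephant random walk
`S̃_n = S_n − n m₁`: `E(S̃_{n+1}²) = (1 + 2α/n) E(S̃_n²) + M₂` with `E(S̃_1²) = M₂`,
where `M₂ = m₂ − m₁²`. -/
theorem erw_second_moment_recursion {Ω : Type*} [MeasurableSpace Ω] (μ : Measure Ω)
    [IsProbabilityMeasure μ] (α : ℝ) (hα : α ∈ Set.Icc (0 : ℝ) 1)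
    (E : ERW μ α) (hint : Integrable (fun ω => (E.ξ 1 ω) ^ 2) μ) :
    let m2 : ℝ := ∫ ω, (E.ξ 1 ω) ^ 2 ∂μ
    let M2 : ℝ := m2 - E.m1 ^ 2
    (∫ ω, (E.S 1 ω - 1 * E.m1) ^ 2 ∂μ) = M2 ∧
    ∀ n : ℕ, 1 ≤ n →
      (∫ ω, (E.S (n + 1) ω - (n + 1) * E.m1) ^ 2 ∂μ)
        = (1 + 2 * α / n) * (∫ ω, (E.S n ω - n * E.m1) ^ 2 ∂μ) + M2 := by
  intro m2 M2
  have hξ2 : MemLp (E.ξ 1) 2 μ :=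
    (memLp_two_iff_integrable_sq (E.ξ_meas 1).aestronglyMeasurable).mpr hint
  have hξ1int : Integrable (E.ξ 1) μ := hξ2.integrable one_le_two
  have hm1 : ∫ ω, E.ξ 1 ω ∂μ = E.m1 := rfl
  have hmom := ERWAux.moments E hα hint
  constructor
  · -- base case
    have hS1 : ∀ ω, E.S 1 ω = E.ξ 1 ω := by
      intro ω
      rw [ERWAux.S_def]
      beta_reduce
      rw [Finset.Icc_self, Finset.sum_singleton, ERWAux.X_one]
    have hexp : ∀ ω, (E.S 1 ω - 1 * E.m1) ^ 2
        = (E.ξ 1 ω) ^ 2 - (2 * E.m1) * E.ξ 1 ω + E.m1 ^ 2 := by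
      intro ω; rw [hS1 ω]; ring
    show _ = (∫ ω, (E.ξ 1 ω) ^ 2 ∂μ) - E.m1 ^ 2
    simp only [hexp]
    have hsub : Integrable (fun ω => E.ξ 1 ω ^ 2 - 2 * E.m1 * E.ξ 1 ω) μ :=
      hint.sub (hξ1int.const_mul _)
    have hcm : Integrable (fun ω => 2 * E.m1 * E.ξ 1 ω) μ := hξ1int.const_mul _
    rw [integral_add hsub (integrable_const _),
      integral_sub hint hcm, integral_const_mul _ _, integral_const,
      hm1]
    simp only [measure_univ, probReal_univ, smul_eq_mul, one_mul]
    ring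
  · -- recursion
    intro n hn
    have hn' : ((n:ℝ)) ≠ 0 := by
      have : (0:ℝ) < n := by exact_mod_cast hn
      linarith
    set St : Ω → ℝ := fun ω => E.S n ω - n * E.m1 with hSt
    have hStm : Measurable[ERWAux.Gm E n] St := by
      apply Measurable.sub
      · rw [ERWAux.S_def]
        exact Finset.measurable_sum _ (fun k hk => by
          obtain ⟨h1, h2⟩ := Finset.mem_Icc.mp hk
          exact ERWAux.measGm_X E n k h1 h2)
      · exact measurable_const
    have hSnmem : MemLp (E.S n) 2 μ := by
      rw [ERWAux.S_def]
      exact memLp_finset_sum (Finset.Icc 1 n)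
        (fun k hk => (hmom k (Finset.mem_Icc.mp hk).1).1)
    have hSmem : MemLp St 2 μ := hSnmem.sub (memLp_const _)
    have hStint : Integrable St μ := hSmem.integrable one_le_two
    have hStsq : Integrable (fun ω => St ω ^ 2) μ := hSmem.integrable_sq
    have hSnint : Integrable (E.S n) μ := hSnmem.integrable one_le_two
    have intSn : ∫ ω, E.S n ω ∂μ = n * E.m1 := by
      rw [ERWAux.S_def]
      rw [integral_finset_sum _
        (fun k hk => (hmom k (Finset.mem_Icc.mp hk).1).1.integrable one_le_two)]
      rw [Finset.sum_congr rfl (fun k hk => (hmom k (Finset.mem_Icc.mp hk).1).2.1),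
        Finset.sum_const, nsmul_eq_mul, Nat.card_Icc]
      norm_num
    have intSt : ∫ ω, St ω ∂μ = 0 := by
      rw [hSt]
      rw [integral_sub hSnint (integrable_const _), intSn, integral_const]
      simp
    have hXk_int : ∀ k ∈ Finset.Icc 1 n, Integrable (fun ω => St ω * E.X k ω) μ :=
      fun k hk => ERWAux.integrable_mul_of_memLp_two hSmem
        (hmom k (Finset.mem_Icc.mp hk).1).1
    have hd := ERWAux.integral_decomp E hα hn (fun x => x) measurable_id hξ1int
      St hStm hStint (fun k hk => hXk_int k hk)
    have hsum : ∑ k ∈ Finset.Icc 1 n, ∫ ω, St ω * E.X k ω ∂μ = ∫ ω, St ω ^ 2 ∂μ := by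
      rw [← integral_finset_sum _ (fun k hk => hXk_int k hk)]
      have hpt : (fun ω => ∑ k ∈ Finset.Icc 1 n, St ω * E.X k ω)
          = fun ω => St ω ^ 2 + ((n : ℝ) * E.m1) * St ω := by
        funext ω
        rw [← Finset.mul_sum]
        have h1 : ∑ k ∈ Finset.Icc 1 n, E.X k ω = E.S n ω := rfl
        rw [h1, hSt]
        ring
      rw [hpt, integral_add hStsq (hStint.const_mul _), integral_const_mul _ _, intSt]
      ring
    have hcross : ∫ ω, St ω * E.X (n+1) ω ∂μ = (α / n) * ∫ ω, St ω ^ 2 ∂μ := by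
      have h2 : ∫ ω, St ω * E.X (n+1) ω ∂μ
          = (α / n) * (∑ k ∈ Finset.Icc 1 n, ∫ ω, St ω * E.X k ω ∂μ)
            + (1 - α) * (∫ ω, St ω ∂μ) * (∫ ω, E.ξ 1 ω ∂μ) := hd.2
      rw [h2, hsum, intSt]
      ring
    have hcrossint : Integrable (fun ω => St ω * E.X (n+1) ω) μ := hd.1
    have hXmem : MemLp (E.X (n+1)) 2 μ := (hmom (n+1) (by omega)).1
    have hXint : Integrable (E.X (n+1)) μ := hXmem.integrable one_le_two
    have hXsq : Integrable (fun ω => (E.X (n+1) ω) ^ 2) μ := hXmem.integrable_sq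
    have hXmean : ∫ ω, E.X (n+1) ω ∂μ = E.m1 := (hmom (n+1) (by omega)).2.1
    have hXsqmean : ∫ ω, (E.X (n+1) ω) ^ 2 ∂μ = ∫ ω, (E.ξ 1 ω) ^ 2 ∂μ :=
      (hmom (n+1) (by omega)).2.2
    -- expansion
    have hSrec : ∀ ω, E.S (n+1) ω = E.S n ω + E.X (n+1) ω := by
      intro ω
      rw [ERWAux.S_def, ERWAux.S_def]
      exact Finset.sum_Icc_succ_top (by omega) _
    have hexp : ∀ ω, (E.S (n+1) ω - ((n:ℝ) + 1) * E.m1) ^ 2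
        = (St ω ^ 2 + 2 * (St ω * E.X (n+1) ω) + (-(2 * E.m1)) * St ω)
          + ((E.X (n+1) ω) ^ 2 + (-(2 * E.m1)) * E.X (n+1) ω + E.m1 ^ 2) := by
      intro ω
      rw [hSrec ω, hSt]
      push_cast
      ring
    show _ = _ * _ + ((∫ ω, (E.ξ 1 ω) ^ 2 ∂μ) - E.m1 ^ 2)
    have hgoal : (∫ ω, (E.S (n + 1) ω - ((n:ℝ) + 1) * E.m1) ^ 2 ∂μ)
        = (∫ ω, St ω ^ 2 ∂μ) + 2 * ((α / n) * ∫ ω, St ω ^ 2 ∂μ)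
          + ((∫ ω, (E.ξ 1 ω) ^ 2 ∂μ) - 2 * E.m1 * E.m1 + E.m1 ^ 2) := by
      simp only [hexp]
      have h2c : Integrable (fun ω => 2 * (St ω * E.X (n+1) ω)) μ := hcrossint.const_mul 2
      have hc1 : Integrable (fun ω => (-(2 * E.m1)) * St ω) μ := hStint.const_mul _
      have hc2 : Integrable (fun ω => (-(2 * E.m1)) * E.X (n+1) ω) μ := hXint.const_mul _
      have hA1 : Integrable (fun ω => St ω ^ 2 + 2 * (St ω * E.X (n+1) ω)) μ :=
        hStsq.add h2c
      have hA : Integrable (fun ω => St ω ^ 2 + 2 * (St ω * E.X (n+1) ω)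
          + (-(2 * E.m1)) * St ω) μ := hA1.add hc1
      have hB1 : Integrable (fun ω => (E.X (n+1) ω) ^ 2
          + (-(2 * E.m1)) * E.X (n+1) ω) μ := hXsq.add hc2
      have hB : Integrable (fun ω => (E.X (n+1) ω) ^ 2
          + (-(2 * E.m1)) * E.X (n+1) ω + E.m1 ^ 2) μ := hB1.add (integrable_const _)
      rw [integral_add hA hB,
        integral_add hA1 hc1,
        integral_add hStsq h2c,
        integral_add hB1 (integrable_const _),
        integral_add hXsq hc2,
        integral_const_mul _ _, integral_const_mul _ _, integral_const_mul _ _,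
        intSt, hcross, hXmean, hXsqmean, integral_const]
      simp only [measure_univ, probReal_univ, smul_eq_mul, one_mul]
      ring
    have hfin : (∫ ω, (E.S n ω - (n:ℝ) * E.m1) ^ 2 ∂μ) = ∫ ω, St ω ^ 2 ∂μ := rfl
    rw [hfin, hgoal]
    ring
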